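/- Let V be a representation of o_5 and v ∈ V a vector with T v = 0 and X^{k+1} v = 0, where X = e_{12}−e_{45}, T = √2(e_{23}−e_{34}). Then for every scalar ξ, (X + ξZ − ξ²Y)^{k+1} v = 0, where Y = e_{14}−e_{25} and Z = √2(−e_{13}+e_{35}). -/

import Mathlib

set_option maxHeartbeats 2000000

open Finset Matrix

/-- Matrix units e_{ab} for 5×5 complex matrices (0-based indices). -/
noncomputable def E5 (a b : Fin 5) : Matrix (Fin 5) (Fin 5) ℂ :=
  Matrix.single a b 1

/-- Membership in o_5: the condition c_{ab} + c_{6−b,6−a} = 0 (written with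
0-based indices as c_{ab} + c_{4−b,4−a} = 0). -/
def memO5 (c : Matrix (Fin 5) (Fin 5) ℂ) : Prop :=
  ∀ a b : Fin 5, c a b + c (4 - b) (4 - a) = 0

/-- X = e_{12} − e_{45}. -/
noncomputable def Xo5 : Matrix (Fin 5) (Fin 5) ℂ := E5 0 1 - E5 3 4
/-- X̄ = e_{21} − e_{54}. -/
noncomputable def Xbo5 : Matrix (Fin 5) (Fin 5) ℂ := E5 1 0 - E5 4 3
/-- Y = e_{14} − e_{25}. -/
noncomputable def Yo5 : Matrix (Fin 5) (Fin 5) ℂ := E5 0 3 - E5 1 4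
/-- Ȳ = e_{41} − e_{52}. -/
noncomputable def Ybo5 : Matrix (Fin 5) (Fin 5) ℂ := E5 3 0 - E5 4 1
/-- Z = √2(−e_{13} + e_{35}). -/
noncomputable def Zo5 : Matrix (Fin 5) (Fin 5) ℂ :=
  (Real.sqrt 2 : ℂ) • (-(E5 0 2) + E5 2 4)
/-- Z̄ = √2(−e_{31} + e_{53}). -/
noncomputable def Zbo5 : Matrix (Fin 5) (Fin 5) ℂ :=
  (Real.sqrt 2 : ℂ) • (-(E5 2 0) + E5 4 2)
/-- T = √2(e_{23} − e_{34}). -/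
noncomputable def To5 : Matrix (Fin 5) (Fin 5) ℂ :=
  (Real.sqrt 2 : ℂ) • (E5 1 2 - E5 2 3)
/-- T̄ = √2(e_{32} − e_{43}). -/
noncomputable def Tbo5 : Matrix (Fin 5) (Fin 5) ℂ :=
  (Real.sqrt 2 : ℂ) • (E5 2 1 - E5 3 2)



private theorem triangleSum {M : Type*} [AddCommMonoid M] (N : ℕ) (f : ℕ → ℕ → M) :
    ∑ j ∈ range N, ∑ k ∈ range (j + 1), f (j - k) k
      = ∑ i ∈ range N, ∑ m ∈ range (N - i), f i m := by
  rw [Finset.sum_sigma', Finset.sum_sigma']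
  refine sum_nbij' (fun x ↦ ⟨x.1 - x.2, x.2⟩) (fun x ↦ ⟨x.1 + x.2, x.2⟩) ?_ ?_ ?_ ?_ ?_ <;>
      rintro ⟨a, b⟩ h <;>
      simp only [Finset.mem_sigma, Finset.mem_range] at h ⊢ <;>
    first
      | omega
      | rfl
      | (have e : a - b + b = a := by omega
         simp [e])
      | (have e : a + b - b = a := by omega
         simp [e])

private theorem coeffId (ξ : ℂ) {j k : ℕ} (h : k ≤ j) :
    ξ ^ j / j.factorial * (j.choose k : ℂ) =
      ξ ^ (j - k) / (j - k).factorial * (ξ ^ k / k.factorial) := by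
  have h1 : ((j.choose k : ℕ) : ℂ) * (k.factorial : ℕ) * ((j - k).factorial : ℕ)
      = (j.factorial : ℕ) := by
    exact_mod_cast congrArg (Nat.cast (R := ℂ)) (Nat.choose_mul_factorial_mul_factorial h)
  have h2 : ξ ^ j = ξ ^ (j - k) * ξ ^ k := by rw [← pow_add, Nat.sub_add_cancel h]
  have f1 : ((j.factorial : ℕ) : ℂ) ≠ 0 := Nat.cast_ne_zero.2 j.factorial_ne_zero
  have f2 : (((j - k).factorial : ℕ) : ℂ) ≠ 0 := Nat.cast_ne_zero.2 (j - k).factorial_ne_zero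
  have f3 : ((k.factorial : ℕ) : ℂ) ≠ 0 := Nat.cast_ne_zero.2 k.factorial_ne_zero
  field_simp
  rw [h2, ← h1]
  ring

section Abstract

variable {R : Type*} [Ring R] [Algebra ℂ R]
variable (D : R →ₗ[ℂ] R)

private theorem iterD_zero (m : ℕ) : (⇑D)^[m] (0 : R) = 0 :=
  Function.iterate_fixed (map_zero D) m

variable (hD : ∀ a b : R, D (a * b) = D a * b + a * D b)

include hD in
private theorem myIterLeibniz (n : ℕ) (p q : R) :
    (⇑D)^[n] (p * q) =
      ∑ k ∈ range n.succ, (n.choose k • ((⇑D)^[n - k] p * (⇑D)^[k] q)) := by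
  induction n with
  | zero =>
    simp [Finset.range]
  | succ n IH =>
    calc
      (⇑D)^[n + 1] (p * q) =
          D (∑ k ∈ range n.succ,
              n.choose k • ((⇑D)^[n - k] p * (⇑D)^[k] q)) := by
        rw [Function.iterate_succ_apply', IH]
      _ = (∑ k ∈ range n.succ,
            n.choose k • ((⇑D)^[n - k + 1] p * (⇑D)^[k] q)) +
          ∑ k ∈ range n.succ,
            n.choose k • ((⇑D)^[n - k] p * (⇑D)^[k + 1] q) := by
        simp_rw [map_sum, map_nsmul, hD, Function.iterate_succ_apply',
          smul_add, sum_add_distrib]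
      _ = (∑ k ∈ range n.succ,
                n.choose k.succ • ((⇑D)^[n - k] p * (⇑D)^[k + 1] q)) +
              1 • ((⇑D)^[n + 1] p * (⇑D)^[0] q) +
            ∑ k ∈ range n.succ, n.choose k • ((⇑D)^[n - k] p * (⇑D)^[k + 1] q) :=
        ?_
      _ = ((∑ k ∈ range n.succ, n.choose k • ((⇑D)^[n - k] p * (⇑D)^[k + 1] q)) +
              ∑ k ∈ range n.succ,
                n.choose k.succ • ((⇑D)^[n - k] p * (⇑D)^[k + 1] q)) +
            1 • ((⇑D)^[n + 1] p * (⇑D)^[0] q) := by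
        rw [add_comm, add_assoc]
      _ = (∑ i ∈ range n.succ,
              (n + 1).choose (i + 1) • ((⇑D)^[n + 1 - (i + 1)] p * (⇑D)^[i + 1] q)) +
            1 • ((⇑D)^[n + 1] p * (⇑D)^[0] q) := by
        simp_rw [Nat.choose_succ_succ, Nat.succ_sub_succ, add_smul, sum_add_distrib]
      _ = ∑ k ∈ range n.succ.succ,
            n.succ.choose k • ((⇑D)^[n.succ - k] p * (⇑D)^[k] q) := by
        rw [sum_range_succ' _ n.succ, Nat.choose_zero_right, tsub_zero]
    congr
    refine (sum_range_succ' _ _).trans (congr_arg₂ (· + ·) ?_ ?_)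
    · rw [sum_range_succ, Nat.choose_succ_self, zero_smul, add_zero]
      refine sum_congr rfl fun k hk => ?_
      rw [mem_range] at hk
      congr
      omega
    · rw [Nat.choose_zero_right, tsub_zero]

include hD in
private theorem myD_one : D (1 : R) = 0 := by
  have h := hD 1 1
  rw [one_mul, mul_one, one_mul] at h
  have h2 : D 1 + 0 = D 1 + D 1 := by rw [add_zero]; exact h
  simpa using (add_left_cancel h2).symm

variable (x z w : R) (hx : D x = z) (hz : D z = w) (hw : D w = 0)

include hx hz hw in
private theorem Dx_big : ∀ i, 3 ≤ i → (⇑D)^[i] x = 0 := by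
  intro i hi
  obtain ⟨m, rfl⟩ : ∃ m, i = m + 3 := ⟨i - 3, by omega⟩
  rw [Function.iterate_add_apply]
  have h3 : (⇑D)^[3] x = 0 := by
    simp [Function.iterate_succ_apply, hx, hz, hw]
  rw [h3, iterD_zero]

include hD hx hz hw in
private theorem Dpow_vanish : ∀ n m, 2 * n < m → (⇑D)^[m] (x ^ n) = 0 := by
  intro n
  induction n with
  | zero =>
    intro m hm
    obtain ⟨m', rfl⟩ : ∃ m', m = m' + 1 := ⟨m - 1, by omega⟩
    have h1 : D (x ^ 0) = 0 := by rw [pow_zero]; exact myD_one D hD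
    rw [Function.iterate_succ_apply, h1, iterD_zero]
  | succ n IH =>
    intro m hm
    rw [pow_succ', myIterLeibniz D hD m x (x ^ n)]
    apply Finset.sum_eq_zero
    intro k hk
    rcases le_or_gt k (2 * n) with h | h
    · rw [Dx_big D x z w hx hz hw (m - k) (by omega), zero_mul, smul_zero]
    · rw [IH k (by omega), mul_zero, smul_zero]

include hD hx hz hw in
private theorem expandPow (ξ : ℂ) :
    ∀ n : ℕ, (x + ξ • z + (ξ ^ 2 / 2) • w) ^ n
      = ∑ j ∈ range (2 * n + 1), (ξ ^ j / j.factorial : ℂ) • (⇑D)^[j] (x ^ n) := by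
  intro n
  induction n with
  | zero => norm_num
  | succ n IH =>
    have hM : (x + ξ • z + (ξ ^ 2 / 2) • w)
        = ∑ i ∈ range 3, (ξ ^ i / i.factorial : ℂ) • (⇑D)^[i] x := by
      rw [show (3 : ℕ) = 2 + 1 from rfl, sum_range_succ, sum_range_succ, sum_range_one]
      have e0 : (⇑D)^[0] x = x := rfl
      have e1 : (⇑D)^[1] x = z := by simp [hx]
      have e2 : (⇑D)^[2] x = w := by
        simp [Function.iterate_succ_apply, hx, hz]
      rw [e0, e1, e2]
      norm_num [Nat.factorial]
    -- step A : expand the product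
    have hA : (x + ξ • z + (ξ ^ 2 / 2) • w) ^ (n + 1)
        = ∑ i ∈ range 3, ∑ m ∈ range (2 * n + 1),
            ((ξ ^ i / i.factorial) * (ξ ^ m / m.factorial) : ℂ) •
              ((⇑D)^[i] x * (⇑D)^[m] (x ^ n)) := by
      rw [pow_succ', IH, hM, Finset.sum_mul_sum]
      refine sum_congr rfl fun i _ => sum_congr rfl fun m _ => ?_
      rw [smul_mul_smul_comm]
    -- step B : expand the iterated derivative of x^(n+1) by Leibniz
    have hB : ∑ j ∈ range (2 * (n + 1) + 1), (ξ ^ j / j.factorial : ℂ) • (⇑D)^[j] (x ^ (n + 1))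
        = ∑ i ∈ range (2 * n + 3), ∑ m ∈ range (2 * n + 3 - i),
            ((ξ ^ i / i.factorial) * (ξ ^ m / m.factorial) : ℂ) •
              ((⇑D)^[i] x * (⇑D)^[m] (x ^ n)) := by
      have : ∀ j : ℕ, (ξ ^ j / j.factorial : ℂ) • (⇑D)^[j] (x ^ (n + 1))
          = ∑ k ∈ range (j + 1),
              ((ξ ^ (j - k) / (j - k).factorial) * (ξ ^ k / k.factorial) : ℂ) •
                ((⇑D)^[j - k] x * (⇑D)^[k] (x ^ n)) := by
        intro j
        rw [pow_succ', myIterLeibniz D hD j x (x ^ n), Finset.smul_sum]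
        refine sum_congr rfl fun k hk => ?_
        rw [mem_range] at hk
        rw [← Nat.cast_smul_eq_nsmul ℂ, smul_smul, coeffId ξ (by omega : k ≤ j)]
      calc ∑ j ∈ range (2 * (n + 1) + 1), (ξ ^ j / j.factorial : ℂ) • (⇑D)^[j] (x ^ (n + 1))
          = ∑ j ∈ range (2 * n + 3), ∑ k ∈ range (j + 1),
              ((ξ ^ (j - k) / (j - k).factorial) * (ξ ^ k / k.factorial) : ℂ) •
                ((⇑D)^[j - k] x * (⇑D)^[k] (x ^ n)) := by
            rw [show 2 * (n + 1) + 1 = 2 * n + 3 by ring]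
            exact sum_congr rfl fun j _ => this j
        _ = _ := triangleSum (2 * n + 3)
              (fun i m => ((ξ ^ i / i.factorial) * (ξ ^ m / m.factorial) : ℂ) •
                ((⇑D)^[i] x * (⇑D)^[m] (x ^ n)))
    rw [hA, hB]
    -- step C : reconcile ranges
    have hsub : ∀ i ∈ range 3, ∑ m ∈ range (2 * n + 1),
          ((ξ ^ i / i.factorial) * (ξ ^ m / m.factorial) : ℂ) •
            ((⇑D)^[i] x * (⇑D)^[m] (x ^ n))
        = ∑ m ∈ range (2 * n + 3 - i),
            ((ξ ^ i / i.factorial) * (ξ ^ m / m.factorial) : ℂ) •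
              ((⇑D)^[i] x * (⇑D)^[m] (x ^ n)) := by
      intro i hi
      rw [mem_range] at hi
      refine Finset.sum_subset (by intro m hm; rw [mem_range] at hm ⊢; omega) ?_
      intro m hm hm'
      rw [mem_range] at hm
      simp only [mem_range, not_lt] at hm'
      rw [Dpow_vanish D hD x z w hx hz hw n m (by omega), mul_zero, smul_zero]
    rw [sum_congr rfl hsub]
    refine Finset.sum_subset (by intro i hi; rw [mem_range] at hi ⊢; omega) ?_
    intro i hi hi'
    rw [mem_range] at hi
    apply Finset.sum_eq_zero
    intro m _
    rw [Dx_big D x z w hx hz hw i (by simpa using hi'), zero_mul, smul_zero]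

end Abstract

private theorem memX : memO5 Xo5 := by
  intro a b
  fin_cases a <;> fin_cases b <;>
    simp [Xo5, E5, Matrix.single] <;> norm_num

private theorem memY : memO5 Yo5 := by
  intro a b
  fin_cases a <;> fin_cases b <;>
    simp [Yo5, E5, Matrix.single] <;> norm_num

private theorem memZ : memO5 Zo5 := by
  intro a b
  fin_cases a <;> fin_cases b <;>
    simp [Zo5, E5, Matrix.single] <;> norm_num

private theorem memT : memO5 To5 := by
  intro a b
  fin_cases a <;> fin_cases b <;>
    simp [To5, E5, Matrix.single] <;> norm_num

private theorem bTX : ⁅To5, Xo5⁆ = Zo5 := by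
  show To5 * Xo5 - Xo5 * To5 = Zo5
  ext i j
  fin_cases i <;> fin_cases j <;>
    simp [To5, Xo5, Zo5, E5, Matrix.mul_apply, Fin.sum_univ_five, Matrix.single] <;>
    ring_nf

private theorem bTZ : ⁅To5, Zo5⁆ = (-2 : ℂ) • Yo5 := by
  show To5 * Zo5 - Zo5 * To5 = (-2 : ℂ) • Yo5
  have h2 : ((Real.sqrt 2 : ℝ) : ℂ) * ((Real.sqrt 2 : ℝ) : ℂ) = 2 := by
    rw [← Complex.ofReal_mul, Real.mul_self_sqrt (by norm_num)]
    norm_num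
  ext i j
  fin_cases i <;> fin_cases j <;>
    simp [To5, Zo5, Yo5, E5, Matrix.mul_apply, Fin.sum_univ_five, Matrix.single] <;>
    ring_nf <;>
    rw [sq, h2]

private theorem bTY : ⁅To5, Yo5⁆ = 0 := by
  show To5 * Yo5 - Yo5 * To5 = 0
  ext i j
  fin_cases i <;> fin_cases j <;>
    simp [To5, Yo5, E5, Matrix.mul_apply, Fin.sum_univ_five, Matrix.single]

/-- for a representation ρ of o_5 and a vector v with Tv = 0 and
X^{k+1}v = 0, one has (X + ξZ − ξ²Y)^{k+1} v = 0 for every scalar ξ. -/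
theorem conjugated_nilpotency {V : Type*} [AddCommGroup V] [Module ℂ V]
    (ρ : Matrix (Fin 5) (Fin 5) ℂ →ₗ[ℂ] Module.End ℂ V)
    (hρ : ∀ c d : Matrix (Fin 5) (Fin 5) ℂ, memO5 c → memO5 d →
      ρ ⁅c, d⁆ = ⁅ρ c, ρ d⁆)
    (k : ℕ) (v : V)
    (hT : ρ To5 v = 0) (hX : ((ρ Xo5) ^ (k + 1)) v = 0) :
    ∀ ξ : ℂ, ((ρ Xo5 + ξ • ρ Zo5 - ξ ^ 2 • ρ Yo5) ^ (k + 1)) v = 0 := by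
  intro ξ
  set t : Module.End ℂ V := ρ To5 with ht
  set x : Module.End ℂ V := ρ Xo5 with hxdef
  set z : Module.End ℂ V := ρ Zo5 with hzdef
  set y : Module.End ℂ V := ρ Yo5 with hydef
  let D : Module.End ℂ V →ₗ[ℂ] Module.End ℂ V :=
    LinearMap.mulLeft ℂ t - LinearMap.mulRight ℂ t
  have hDdef : ∀ a : Module.End ℂ V, D a = t * a - a * t := by
    intro a
    simp [D, LinearMap.sub_apply]
  have hD : ∀ a b : Module.End ℂ V, D (a * b) = D a * b + a * D b := by
    intro a b
    simp only [hDdef]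
    noncomm_ring
  have hx : D x = z := by
    have h := hρ To5 Xo5 memT memX
    rw [bTX] at h
    rw [hDdef, ← Ring.lie_def]
    exact h.symm
  have hz : D z = (-2 : ℂ) • y := by
    have h := hρ To5 Zo5 memT memZ
    rw [bTZ, _root_.map_smul] at h
    rw [hDdef, ← Ring.lie_def]
    exact h.symm
  have hw : D ((-2 : ℂ) • y) = 0 := by
    have h := hρ To5 Yo5 memT memY
    rw [bTY, map_zero] at h
    rw [_root_.map_smul]
    have hy0 : D y = 0 := by rw [hDdef, ← Ring.lie_def]; exact h.symm
    rw [hy0, smul_zero]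
  have hexp := expandPow D hD x z ((-2 : ℂ) • y) hx hz hw ξ (k + 1)
  have hM : x + ξ • z - ξ ^ 2 • y = x + ξ • z + (ξ ^ 2 / 2) • ((-2 : ℂ) • y) := by
    rw [smul_smul]
    have : ξ ^ 2 / 2 * (-2) = -(ξ ^ 2) := by ring
    rw [this, neg_smul, ← sub_eq_add_neg]
  rw [hM, hexp]
  have hker : ∀ (j : ℕ) (A : Module.End ℂ V), A v = 0 → ((⇑D)^[j] A) v = 0 := by
    intro j
    induction j with
    | zero => intro A h; exact h
    | succ j IH =>
      intro A h
      rw [Function.iterate_succ_apply]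
      apply IH
      rw [hDdef]
      have : (t * A - A * t) v = t (A v) - A (t v) := by
        simp [LinearMap.sub_apply, Module.End.mul_apply]
      rw [this, h, hT, map_zero, map_zero, sub_zero]
  have : (∑ j ∈ range (2 * (k + 1) + 1),
      (ξ ^ j / j.factorial : ℂ) • (⇑D)^[j] (x ^ (k + 1))) v
      = ∑ j ∈ range (2 * (k + 1) + 1),
        (ξ ^ j / j.factorial : ℂ) • (((⇑D)^[j] (x ^ (k + 1))) v) := by
    simp [LinearMap.sum_apply, LinearMap.smul_apply]
  rw [this]
  apply Finset.sum_eq_zero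
  intro j _
  rw [hker j (x ^ (k + 1)) hX, smul_zero]
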